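/- Expected bias bound via Cauchy–Schwarz and Markov: let B = 1[|C − Z| ≤ h|V − Z|]·|V − Z| with h ≥ 0, and let E be any event with 1[Eᶜ] implying h ≤ kM/N and |C − Z| ≥ c. Then E[B] ≤ (P[E]·E[(V−Z)²])^{1/2} + (kM/(cN))·E[(V−Z)²]. -/

import Mathlib

open MeasureTheory

/-- Expected bias bound via Cauchy–Schwarz and Markov. With
`B = 1[|C − Z| ≤ h|V − Z|]·|V − Z|`, `h ≥ 0`, and an event E such that outside
E we have `h ≤ kM/N` and `|C − Z| ≥ c`, we get
`E[B] ≤ √(P[E]·E[(V−Z)²]) + (kM/(cN))·E[(V−Z)²]`. -/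
theorem expected_bias_bound {Ω : Type*} [MeasurableSpace Ω]
    (μ : Measure Ω) [IsProbabilityMeasure μ]
    (V Z C h : Ω → ℝ)
    (hVm : Measurable V) (hZm : Measurable Z) (hCm : Measurable C)
    (hhm : Measurable h) (hh : ∀ ω, 0 ≤ h ω)
    (c k M N : ℝ) (hc : 0 < c) (hk : 0 < k) (hM : 0 < M) (hN : 0 < N)
    (E : Set Ω) (hE : MeasurableSet E)
    (hEc : ∀ ω ∉ E, h ω ≤ k * M / N ∧ c ≤ |C ω - Z ω|)
    (hint : Integrable (fun ω => (V ω - Z ω) ^ 2) μ) :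
    (∫ ω, (if |C ω - Z ω| ≤ h ω * |V ω - Z ω| then (1 : ℝ) else 0)
        * |V ω - Z ω| ∂μ)
      ≤ Real.sqrt ((μ E).toReal * ∫ ω, (V ω - Z ω) ^ 2 ∂μ)
        + (k * M / (c * N)) * ∫ ω, (V ω - Z ω) ^ 2 ∂μ := by
  set g : Ω → ℝ := fun ω => |V ω - Z ω| with hg_def
  have hgm : Measurable g := (hVm.sub hZm).abs
  have hgsq : ∀ ω, g ω ^ 2 = (V ω - Z ω) ^ 2 := fun ω => sq_abs _
  have hg2 : MemLp g 2 μ := by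
    rw [memLp_two_iff_integrable_sq hgm.aestronglyMeasurable]
    exact hint.congr (by filter_upwards with ω using (hgsq ω).symm)
  have hgint : Integrable g μ := hg2.integrable one_le_two
  -- the indicator set
  set S : Set Ω := {ω | |C ω - Z ω| ≤ h ω * |V ω - Z ω|} with hS_def
  have hSm : MeasurableSet S :=
    measurableSet_le (hCm.sub hZm).abs (hhm.mul (hVm.sub hZm).abs)
  set B : Ω → ℝ := fun ω =>
    (if |C ω - Z ω| ≤ h ω * |V ω - Z ω| then (1 : ℝ) else 0) * |V ω - Z ω| with hB_def
  have hBm : Measurable B := by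
    apply Measurable.mul _ hgm
    exact Measurable.ite hSm measurable_const measurable_const
  have hBnonneg : ∀ ω, 0 ≤ B ω := by
    intro ω
    by_cases hw : |C ω - Z ω| ≤ h ω * |V ω - Z ω| <;>
      simp [hB_def, hw, abs_nonneg]
  have hBle : ∀ ω, B ω ≤ g ω := by
    intro ω
    by_cases hw : |C ω - Z ω| ≤ h ω * |V ω - Z ω| <;>
      simp [hB_def, hg_def, hw, abs_nonneg]
  have hBint : Integrable B μ := by
    refine Integrable.mono hgint hBm.aestronglyMeasurable ?_
    filter_upwards with ω
    rw [Real.norm_eq_abs, Real.norm_eq_abs, abs_of_nonneg (hBnonneg ω),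
      abs_of_nonneg (abs_nonneg _)]
    exact hBle ω
  -- pointwise bound : B ≤ 1_E * g + (kM/(cN)) * g^2
  have hpt : ∀ ω, B ω ≤ E.indicator (fun _ => (1:ℝ)) ω * g ω
      + (k * M / (c * N)) * g ω ^ 2 := by
    intro ω
    by_cases hωE : ω ∈ E
    · have h1 : E.indicator (fun _ => (1:ℝ)) ω = 1 := Set.indicator_of_mem hωE _
      have h2 : 0 ≤ (k * M / (c * N)) * g ω ^ 2 := by positivity
      calc B ω ≤ g ω := hBle ω
        _ ≤ E.indicator (fun _ => (1:ℝ)) ω * g ω + (k * M / (c * N)) * g ω ^ 2 := by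
            rw [h1]; linarith
    · have h1 : E.indicator (fun _ => (1:ℝ)) ω = 0 := Set.indicator_of_notMem hωE _
      obtain ⟨hh1, hh2⟩ := hEc ω hωE
      by_cases hw : |C ω - Z ω| ≤ h ω * |V ω - Z ω|
      · have hB1 : B ω = g ω := by simp [hB_def, hg_def, hw]
        have hg0 : 0 ≤ g ω := abs_nonneg _
        have key : c * N ≤ k * M * g ω := by
          have : c ≤ h ω * g ω := le_trans hh2 hw
          have h3 : h ω * g ω ≤ (k * M / N) * g ω := mul_le_mul_of_nonneg_right hh1 hg0
          have h4 : c ≤ (k * M / N) * g ω := le_trans this h3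
          rw [div_mul_eq_mul_div, le_div_iff₀ hN] at h4
          linarith [h4]
        have : g ω ≤ (k * M / (c * N)) * g ω ^ 2 := by
          rw [div_mul_eq_mul_div, le_div_iff₀ (by positivity : (0:ℝ) < c * N)]
          nlinarith [key, hg0, mul_le_mul_of_nonneg_right key hg0]
        rw [hB1, h1]; linarith
      · have hB0 : B ω = 0 := by simp [hB_def, hw]
        have : 0 ≤ (k * M / (c * N)) * g ω ^ 2 := by positivity
        rw [hB0, h1]; linarith
  -- integrability of RHS pieces
  have hind_int : Integrable (fun ω => E.indicator (fun _ => (1:ℝ)) ω * g ω) μ := by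
    refine Integrable.mono hgint ?_ ?_
    · exact ((measurable_one.indicator hE).mul hgm).aestronglyMeasurable
    · filter_upwards with ω
      show ‖E.indicator (fun _ => (1:ℝ)) ω * |V ω - Z ω|‖ ≤ ‖(|V ω - Z ω|)‖
      rw [Real.norm_eq_abs, Real.norm_eq_abs, abs_abs]
      by_cases hωE : ω ∈ E <;>
        simp [Set.indicator_of_mem, Set.indicator_of_notMem, hωE, abs_abs, abs_nonneg]
  have hgsq_int : Integrable (fun ω => g ω ^ 2) μ :=
    hint.congr (by filter_upwards with ω using (hgsq ω).symm)
  -- main chain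
  have step1 : ∫ ω, B ω ∂μ ≤ (∫ ω, E.indicator (fun _ => (1:ℝ)) ω * g ω ∂μ)
      + (k * M / (c * N)) * ∫ ω, g ω ^ 2 ∂μ := by
    rw [← integral_const_mul]
    rw [← integral_add hind_int (hgsq_int.const_mul _)]
    exact integral_mono hBint (hind_int.add (hgsq_int.const_mul _)) hpt
  -- Cauchy–Schwarz on the first piece
  have hCS : (∫ ω, E.indicator (fun _ => (1:ℝ)) ω * g ω ∂μ)
      ≤ Real.sqrt ((μ E).toReal * ∫ ω, g ω ^ 2 ∂μ) := by
    have hind2 : MemLp (fun ω => E.indicator (fun _ => (1:ℝ)) ω) 2 μ := by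
      have : MemLp (E.indicator fun _ => (1:ℝ)) 2 μ := (memLp_const (1:ℝ)).indicator hE
      exact this
    have hpq : Real.HolderConjugate 2 2 := by constructor <;> norm_num
    have := integral_mul_le_Lp_mul_Lq_of_nonneg hpq
      (f := fun ω => E.indicator (fun _ => (1:ℝ)) ω) (g := g)
      (by filter_upwards with ω; by_cases hωE : ω ∈ E <;>
        simp [Set.indicator_of_mem, Set.indicator_of_notMem, hωE])
      (by filter_upwards with ω using abs_nonneg _)
      (by simpa using hind2) (by simpa using hg2)
    have h1 : (∫ ω, E.indicator (fun _ => (1:ℝ)) ω ^ (2:ℝ) ∂μ) = (μ E).toReal := by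
      rw [show (fun ω => E.indicator (fun _ => (1:ℝ)) ω ^ (2:ℝ))
          = fun ω => E.indicator (fun _ => (1:ℝ)) ω from ?_]
      · simpa [Measure.real, Pi.one_def] using integral_indicator_one (μ := μ) hE
      · funext ω
        by_cases hωE : ω ∈ E <;>
          simp [Set.indicator_of_mem, Set.indicator_of_notMem, hωE]
    have h2 : (∫ ω, g ω ^ (2:ℝ) ∂μ) = ∫ ω, g ω ^ 2 ∂μ := by
      refine integral_congr_ae ?_
      filter_upwards with ω
      rw [show ((2:ℝ)) = ((2:ℕ):ℝ) by norm_num, Real.rpow_natCast]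
    have h3 : 0 ≤ ∫ ω, g ω ^ 2 ∂μ :=
      integral_nonneg fun ω => sq_nonneg _
    calc (∫ ω, E.indicator (fun _ => (1:ℝ)) ω * g ω ∂μ)
        ≤ (∫ ω, E.indicator (fun _ => (1:ℝ)) ω ^ (2:ℝ) ∂μ) ^ (1/(2:ℝ))
          * (∫ ω, g ω ^ (2:ℝ) ∂μ) ^ (1/(2:ℝ)) := this
      _ = Real.sqrt ((μ E).toReal) * Real.sqrt (∫ ω, g ω ^ 2 ∂μ) := by
          rw [h1, h2, Real.sqrt_eq_rpow, Real.sqrt_eq_rpow]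
      _ = Real.sqrt ((μ E).toReal * ∫ ω, g ω ^ 2 ∂μ) :=
          (Real.sqrt_mul ENNReal.toReal_nonneg _).symm
  have hgsq_eq : (∫ ω, g ω ^ 2 ∂μ) = ∫ ω, (V ω - Z ω) ^ 2 ∂μ :=
    integral_congr_ae (by filter_upwards with ω using hgsq ω)
  calc (∫ ω, B ω ∂μ)
      ≤ (∫ ω, E.indicator (fun _ => (1:ℝ)) ω * g ω ∂μ)
        + (k * M / (c * N)) * ∫ ω, g ω ^ 2 ∂μ := step1
    _ ≤ Real.sqrt ((μ E).toReal * ∫ ω, g ω ^ 2 ∂μ)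
        + (k * M / (c * N)) * ∫ ω, g ω ^ 2 ∂μ := by linarith [hCS]
    _ = _ := by rw [hgsq_eq]
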